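/- Let r be a positive integer and λ a real number. Then ∫_ℝ z²·(1 + (λ/(2r))·z²)^r · (2π)^{−1/2}·exp(−z²/2) dz = Σ_{j=0}^{r} (r choose j)·(λ/(2r))^j · (2(j+1))!/(2^{j+1}·(j+1)!). Consequently the variance μ₂ of the standardized short-tailed symmetric distribution equals the ratio of this sum to Σ_{j=0}^{r} (r choose j)·(λ/(2r))^j·(2j)!/(2^j j!). -/

import Mathlib

open MeasureTheory Finset

lemma gamma_nat_add_half (m : ℕ) :
    Real.Gamma (m + 1 / 2) = Real.sqrt Real.pi * (2 * m).factorial / (4 ^ m * m.factorial) := by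
  induction m with
  | zero =>
    rw [Nat.cast_zero, zero_add, Real.Gamma_one_half_eq]
    simp
  | succ n ih =>
    have h : ((n : ℝ) + 1) + 1 / 2 = (n + 1 / 2) + 1 := by ring
    push_cast
    rw [h, Real.Gamma_add_one (by positivity), ih]
    have h4 : (0:ℝ) ≠ 4 ^ n := by positivity
    have hn : ((n.factorial : ℝ)) ≠ 0 := by exact_mod_cast n.factorial_ne_zero
    have e1 : (2 * (n + 1)).factorial = (2 * n + 2) * ((2 * n + 1) * (2 * n).factorial) := by
      have : 2 * (n + 1) = (2 * n + 1) + 1 := by ring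
      rw [this, Nat.factorial_succ, Nat.factorial_succ]
    rw [e1]
    push_cast [Nat.factorial_succ]
    field_simp
    ring

lemma gauss_even_integrable (m : ℕ) :
    Integrable (fun x : ℝ => x ^ (2 * m) * Real.exp (-x ^ 2 / 2)) := by
  have h := integrable_rpow_mul_exp_neg_mul_sq (b := 1/2) (by norm_num)
    (s := ((2 * m : ℕ) : ℝ))
    (lt_of_lt_of_le neg_one_lt_zero (by positivity))
  refine h.congr (Filter.Eventually.of_forall fun x => ?_)
  simp only [Real.rpow_natCast]
  rw [show -(1/2 : ℝ) * x ^ 2 = -x ^ 2 / 2 from by ring]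

lemma gauss_moment (m : ℕ) :
    ∫ x : ℝ, x ^ (2 * m) * Real.exp (-x ^ 2 / 2)
      = Real.sqrt (2 * Real.pi) * ((2 * m).factorial / (2 ^ m * m.factorial)) := by
  set f : ℝ → ℝ := fun x => x ^ (2 * m) * Real.exp (-x ^ 2 / 2) with hf
  have hint := gauss_even_integrable m
  have heven : ∀ x : ℝ, f (-x) = f x := by
    intro x; simp only [hf]; rw [neg_pow, neg_pow]; simp [pow_mul]
  have hsplit : ∫ x : ℝ, f x = 2 * ∫ x in Set.Ioi (0:ℝ), f x := by
    rw [← intervalIntegral.integral_Iic_add_Ioi (b := (0:ℝ)) hint.integrableOn hint.integrableOn]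
    have : ∫ x in Set.Iic (0:ℝ), f x = ∫ x in Set.Ioi (0:ℝ), f x := by
      rw [show (0:ℝ) = -0 by norm_num, ← integral_comp_neg_Ioi]
      simp only [heven, neg_zero]
    rw [this]; ring
  have hIoi : ∫ x in Set.Ioi (0:ℝ), f x
      = ((1:ℝ)/2) ^ (-(((2*m : ℕ):ℝ) + 1) / 2) * (1 / 2) * Real.Gamma ((((2*m:ℕ):ℝ) + 1) / 2) := by
    rw [← integral_rpow_mul_exp_neg_mul_rpow (p := 2) (q := ((2*m : ℕ):ℝ)) (b := 1/2)
      (by norm_num) (lt_of_lt_of_le neg_one_lt_zero (by positivity)) (by norm_num)]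
    refine setIntegral_congr_fun measurableSet_Ioi fun x hx => ?_
    simp only [hf]
    rw [Real.rpow_natCast, Real.rpow_two]
    congr 1
    congr 1
    ring
  have hpow : ((1:ℝ)/2) ^ (-(((2*m : ℕ):ℝ) + 1) / 2) = 2 ^ (m:ℝ) * Real.sqrt 2 := by
    rw [one_div, Real.inv_rpow (by norm_num : (0:ℝ) ≤ 2),
      ← Real.rpow_neg (by norm_num : (0:ℝ) ≤ 2),
      Real.sqrt_eq_rpow, ← Real.rpow_add (by norm_num : (0:ℝ) < 2)]
    congr 1
    push_cast
    ring
  have hGamma : Real.Gamma ((((2*m:ℕ):ℝ) + 1) / 2)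
      = Real.sqrt Real.pi * (2 * m).factorial / (4 ^ m * m.factorial) := by
    rw [← gamma_nat_add_half m]
    congr 1
    push_cast
    ring
  rw [hsplit, hIoi, hpow, hGamma, Real.rpow_natCast]
  have h2 : Real.sqrt (2 * Real.pi) = Real.sqrt 2 * Real.sqrt Real.pi :=
    Real.sqrt_mul (by norm_num) _
  have h4 : (4:ℝ) ^ m = 2 ^ m * 2 ^ m := by rw [← mul_pow]; norm_num
  have hn : (0:ℝ) < (m.factorial : ℝ) := by exact_mod_cast m.factorial_pos
  have h2m : (0:ℝ) < 2 ^ m := by positivity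
  rw [h2, h4]
  field_simp

/-- Second moment of the short-tailed symmetric density:
`∫ z²(1 + (λ/(2r))z²)^r φ(z) dz = Σ_{j=0}^{r} C(r,j) (λ/(2r))^j (2(j+1))!/(2^{j+1}(j+1)!)`;
consequently the variance `μ₂` of the standardized STS distribution (with normalizing
constant `C` the reciprocal of the sum `S₁` of Statement 4) equals the ratio of this sum
to `S₁`. -/
theorem sts_second_moment
    (r : ℕ) (hr : 0 < r) (lam : ℝ) :
    (∫ z : ℝ, z ^ 2 * ((1 + lam / (2 * r) * z ^ 2) ^ r *
        ((Real.sqrt (2 * Real.pi))⁻¹ * Real.exp (-z ^ 2 / 2)))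
      = ∑ j ∈ range (r + 1), (r.choose j : ℝ) * (lam / (2 * r)) ^ j *
          ((2 * (j + 1)).factorial / (2 ^ (j + 1) * (j + 1).factorial))) ∧
    ((∑ j ∈ range (r + 1), (r.choose j : ℝ) * (lam / (2 * r)) ^ j *
          ((2 * j).factorial / (2 ^ j * j.factorial))) ≠ 0 →
      ∫ z : ℝ, z ^ 2 *
          ((∑ j ∈ range (r + 1), (r.choose j : ℝ) * (lam / (2 * r)) ^ j *
              ((2 * j).factorial / (2 ^ j * j.factorial)))⁻¹ *
            ((1 + lam / (2 * r) * z ^ 2) ^ r *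
              ((Real.sqrt (2 * Real.pi))⁻¹ * Real.exp (-z ^ 2 / 2))))
        = (∑ j ∈ range (r + 1), (r.choose j : ℝ) * (lam / (2 * r)) ^ j *
              ((2 * (j + 1)).factorial / (2 ^ (j + 1) * (j + 1).factorial))) /
          (∑ j ∈ range (r + 1), (r.choose j : ℝ) * (lam / (2 * r)) ^ j *
              ((2 * j).factorial / (2 ^ j * j.factorial)))) := by
  set a : ℝ := lam / (2 * r) with ha
  have hsqrt : (0:ℝ) < Real.sqrt (2 * Real.pi) :=
    Real.sqrt_pos.mpr (by positivity)
  -- expansion of the integrand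
  have expand : ∀ z : ℝ, z ^ 2 * ((1 + a * z ^ 2) ^ r *
      ((Real.sqrt (2 * Real.pi))⁻¹ * Real.exp (-z ^ 2 / 2)))
      = ∑ j ∈ range (r + 1), ((r.choose j : ℝ) * a ^ j * (Real.sqrt (2 * Real.pi))⁻¹) *
          (z ^ (2 * (j + 1)) * Real.exp (-z ^ 2 / 2)) := by
    intro z
    rw [add_comm (1:ℝ), add_pow]
    rw [Finset.sum_mul, Finset.mul_sum]
    refine Finset.sum_congr rfl fun j hj => ?_
    rw [mul_pow, one_pow, ← pow_mul]
    ring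
  have hintj : ∀ j : ℕ, Integrable (fun z : ℝ =>
      ((r.choose j : ℝ) * a ^ j * (Real.sqrt (2 * Real.pi))⁻¹) *
        (z ^ (2 * (j + 1)) * Real.exp (-z ^ 2 / 2))) :=
    fun j => (gauss_even_integrable (j + 1)).const_mul _
  have first : ∫ z : ℝ, z ^ 2 * ((1 + a * z ^ 2) ^ r *
      ((Real.sqrt (2 * Real.pi))⁻¹ * Real.exp (-z ^ 2 / 2)))
      = ∑ j ∈ range (r + 1), (r.choose j : ℝ) * a ^ j *
          ((2 * (j + 1)).factorial / (2 ^ (j + 1) * (j + 1).factorial)) := by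
    simp_rw [expand]
    rw [integral_finset_sum _ (fun j _ => hintj j)]
    refine Finset.sum_congr rfl fun j hj => ?_
    rw [integral_const_mul, gauss_moment (j + 1)]
    field_simp
  refine ⟨first, fun hS => ?_⟩
  have : ∀ z : ℝ, z ^ 2 *
      ((∑ j ∈ range (r + 1), (r.choose j : ℝ) * a ^ j *
          ((2 * j).factorial / (2 ^ j * j.factorial)))⁻¹ *
        ((1 + a * z ^ 2) ^ r *
          ((Real.sqrt (2 * Real.pi))⁻¹ * Real.exp (-z ^ 2 / 2))))
      = (∑ j ∈ range (r + 1), (r.choose j : ℝ) * a ^ j *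
          ((2 * j).factorial / (2 ^ j * j.factorial)))⁻¹ *
        (z ^ 2 * ((1 + a * z ^ 2) ^ r *
          ((Real.sqrt (2 * Real.pi))⁻¹ * Real.exp (-z ^ 2 / 2)))) := by
    intro z; ring
  simp_rw [this]
  rw [integral_const_mul, first, inv_mul_eq_div]
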